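/- If G is a d-regular finite simple graph with d ≥ 6, then ch_σ^e(G) ≤ 3: for every linear order on E(G) and every assignment to each edge e of a set L_e of three real numbers, there exists a weighting w with w(e) ∈ L_e for every edge e whose induced sequence colouring of the vertices is proper. -/
import Mathlib


/-!
Common definitions: sequence colourings induced by an edge weighting and a linear
order on the edge set of a finite simple graph.
-/

open Finset

variable {V : Type*}

/-- The list of edges incident to `v`, sorted in increasing order with respect to the
linear order `σ` on `E(G)`. -/
noncomputable def incEdges [Fintype V] [DecidableEq V] (G : SimpleGraph V) [DecidableRel G.Adj]
    (σ : LinearOrder G.edgeSet) (v : V) : List G.edgeSet :=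
  letI := σ
  ((Finset.univ : Finset G.edgeSet).filter (fun e : G.edgeSet => v ∈ (e : Sym2 V))).sort σ.le

/-- The induced sequence colouring: `c(v)` is the list of weights `w(e)` of the edges `e`
incident to `v`, written in increasing order of `e` with respect to `σ`. -/
noncomputable def seqColor [Fintype V] [DecidableEq V] (G : SimpleGraph V) [DecidableRel G.Adj]
    (σ : LinearOrder G.edgeSet) {α : Type*} (w : G.edgeSet → α) (v : V) : List α :=
  (incEdges G σ v).map w

/-- The induced sequence colouring is proper: adjacent vertices receive distinct sequences. -/
def ProperSeq [Fintype V] [DecidableEq V] (G : SimpleGraph V) [DecidableRel G.Adj]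
    (σ : LinearOrder G.edgeSet) (w : G.edgeSet → ℝ) : Prop :=
  ∀ u v : V, G.Adj u v → seqColor G σ w u ≠ seqColor G σ w v

section Aux

variable [Fintype V] [DecidableEq V] (G : SimpleGraph V) [DecidableRel G.Adj]
  (σ : LinearOrder G.edgeSet)

lemma mem_incEdges {v : V} {x : G.edgeSet} :
    x ∈ incEdges G σ v ↔ v ∈ (x : Sym2 V) := by
  letI := σ
  unfold incEdges
  rw [Finset.mem_sort, Finset.mem_filter]
  simp

lemma card_incFilter {d : ℕ} (hreg : G.IsRegularOfDegree d) (v : V) :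
    ((Finset.univ : Finset G.edgeSet).filter (fun e : G.edgeSet => v ∈ (e : Sym2 V))).card = d := by
  have hbij : ((Finset.univ : Finset G.edgeSet).filter
      (fun e : G.edgeSet => v ∈ (e : Sym2 V))).card = (G.incidenceFinset v).card := by
    refine Finset.card_bij (fun e _ => (e : Sym2 V)) ?_ ?_ ?_
    · intro a ha
      rw [SimpleGraph.mem_incidenceFinset]
      exact ⟨a.prop, (Finset.mem_filter.mp ha).2⟩
    · intro a _ b _ h
      exact Subtype.ext h
    · intro b hb
      rw [SimpleGraph.mem_incidenceFinset] at hb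
      exact ⟨⟨b, hb.1⟩, Finset.mem_filter.mpr ⟨Finset.mem_univ _, hb.2⟩, rfl⟩
  rw [hbij, SimpleGraph.card_incidenceFinset_eq_degree, hreg v]

lemma length_incEdges {d : ℕ} (hreg : G.IsRegularOfDegree d) (v : V) :
    (incEdges G σ v).length = d := by
  letI := σ
  unfold incEdges
  rw [Finset.length_sort]
  exact card_incFilter G hreg v

/-- Key: if `x` incident to `u`, `x ≠ e(u,v)`, and its weight differs from that of the edge at
the same position in the list at `v`, then the sequence colours of `u` and `v` differ. -/
lemma key_distinguish {d : ℕ} (hreg : G.IsRegularOfDegree d) {u v : V} (h : G.Adj u v)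
    (x : G.edgeSet) (hxu : u ∈ (x : Sym2 V)) (hxe : (x : Sym2 V) ≠ s(u, v))
    (w : G.edgeSet → ℝ)
    (hw : w x ≠ w ((incEdges G σ v).getD ((incEdges G σ u).idxOf x) x)) :
    seqColor G σ w u ≠ seqColor G σ w v := by
  intro hc
  have hxl : x ∈ incEdges G σ u := (mem_incEdges G σ).mpr hxu
  have hi : (incEdges G σ u).idxOf x < (incEdges G σ u).length :=
    List.idxOf_lt_length_iff.mpr hxl
  have hlu : (incEdges G σ u).length = d := length_incEdges G σ hreg u
  have hlv : (incEdges G σ v).length = d := length_incEdges G σ hreg v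
  have hi' : (incEdges G σ u).idxOf x < (incEdges G σ v).length := by omega
  have h1 : (incEdges G σ u)[(incEdges G σ u).idxOf x]'hi = x :=
    List.getElem_idxOf hi
  have h2 : (incEdges G σ v).getD ((incEdges G σ u).idxOf x) x
      = (incEdges G σ v)[(incEdges G σ u).idxOf x]'hi' :=
    List.getD_eq_getElem _ _ hi'
  have hmap := congrArg (fun l => l[(incEdges G σ u).idxOf x]?) hc
  simp only [seqColor, List.getElem?_map] at hmap
  rw [List.getElem?_eq_getElem hi, List.getElem?_eq_getElem hi'] at hmap
  simp only [Option.map_some] at hmap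
  apply hw
  rw [h2]
  have hinj := Option.some_injective _ hmap
  rwa [h1] at hinj

end Aux

/-- Greedy colouring along a pseudoforest of constraints: if each constraint pair
`(P a, Q a)` has distinct members and `P` is injective, lists of size 3 suffice. -/
lemma greedy_aux {α : Type*} [Fintype α] [DecidableEq α] (L : α → Finset ℝ)
    (hL : ∀ a, (L a).card = 3) (P Q : α → α) (hPQ : ∀ a, P a ≠ Q a)
    (hinj : Function.Injective P) :
    ∃ w : α → ℝ, (∀ a, w a ∈ L a) ∧ ∀ a, w (P a) ≠ w (Q a) := by
  have hLne : ∀ a, (L a).Nonempty := fun a => Finset.card_pos.mp (by rw [hL a]; norm_num)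
  have main : ∀ n (S : Finset α), S.card ≤ n →
      ∃ w : α → ℝ, (∀ a, w a ∈ L a) ∧ ∀ a, P a ∈ S → Q a ∈ S → w (P a) ≠ w (Q a) := by
    intro n
    induction n with
    | zero =>
      intro S hS
      have hSe : S = ∅ := Finset.card_eq_zero.mp (Nat.le_zero.mp hS)
      exact ⟨fun a => (hLne a).choose, fun a => (hLne a).choose_spec, by simp [hSe]⟩
    | succ n ih =>
      intro S hS
      rcases S.eq_empty_or_nonempty with rfl | hSne
      · exact ⟨fun a => (hLne a).choose, fun a => (hLne a).choose_spec, by simp⟩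
      set T : Finset α := univ.filter (fun a => P a ∈ S ∧ Q a ∈ S) with hT
      have hTcard : T.card ≤ S.card := by
        calc T.card = (T.image P).card := (Finset.card_image_of_injective T hinj).symm
          _ ≤ S.card := Finset.card_le_card (by
              intro y hy
              obtain ⟨a, ha, rfl⟩ := Finset.mem_image.mp hy
              exact (Finset.mem_filter.mp ha).2.1)
      have hex : ∃ y ∈ S, (T.filter (fun a => P a = y ∨ Q a = y)).card ≤ 2 := by
        by_contra hcon
        push_neg at hcon
        have hlow : S.card * 3 ≤ ∑ y ∈ S, (T.filter (fun a => P a = y ∨ Q a = y)).card := by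
          have := Finset.card_nsmul_le_sum S
            (fun y => (T.filter (fun a => P a = y ∨ Q a = y)).card) 3
            (fun y hy => hcon y hy)
          simpa [smul_eq_mul] using this
        have hswap : ∑ y ∈ S, (T.filter (fun a => P a = y ∨ Q a = y)).card
            = ∑ a ∈ T, (S.filter (fun y => P a = y ∨ Q a = y)).card := by
          simp_rw [Finset.card_filter]
          exact Finset.sum_comm
        have hup : ∑ a ∈ T, (S.filter (fun y => P a = y ∨ Q a = y)).card ≤ T.card * 2 := by
          calc ∑ a ∈ T, (S.filter (fun y => P a = y ∨ Q a = y)).card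
              ≤ ∑ _a ∈ T, 2 := by
                apply Finset.sum_le_sum
                intro a _
                calc (S.filter (fun y => P a = y ∨ Q a = y)).card
                    ≤ ({P a, Q a} : Finset α).card := by
                      apply Finset.card_le_card
                      intro y hy
                      rcases (Finset.mem_filter.mp hy).2 with h | h
                      · simp [h.symm]
                      · simp [h.symm]
                  _ ≤ 2 := by
                      apply le_trans (Finset.card_insert_le _ _)
                      simp
            _ = T.card * 2 := by rw [Finset.sum_const, smul_eq_mul]
        have hS1 : 1 ≤ S.card := Finset.card_pos.mpr hSne
        have : S.card * 3 ≤ S.card * 2 := by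
          calc S.card * 3 ≤ T.card * 2 := le_trans hlow (hswap ▸ hup)
            _ ≤ S.card * 2 := by exact Nat.mul_le_mul_right 2 hTcard
        omega
      obtain ⟨y, hyS, hycnt⟩ := hex
      obtain ⟨w', hw'L, hw'⟩ := ih (S.erase y)
        (by rw [Finset.card_erase_of_mem hyS]; omega)
      set F : Finset ℝ := (T.filter (fun a => P a = y ∨ Q a = y)).image
        (fun a => if P a = y then w' (Q a) else w' (P a)) with hF
      have hFcard : F.card ≤ 2 := le_trans Finset.card_image_le hycnt
      have hsd : ((L y) \ F).Nonempty := by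
        apply Finset.card_pos.mp
        have h1 := Finset.le_card_sdiff F (L y)
        rw [hL y] at h1
        omega
      obtain ⟨val, hval⟩ := hsd
      rw [Finset.mem_sdiff] at hval
      refine ⟨Function.update w' y val, ?_, ?_⟩
      · intro a
        by_cases h : a = y
        · subst h; simpa using hval.1
        · rw [Function.update_of_ne h]; exact hw'L a
      · intro a hPa hQa
        have haT : a ∈ T := Finset.mem_filter.mpr ⟨Finset.mem_univ _, hPa, hQa⟩
        by_cases h1 : P a = y
        · have h2 : Q a ≠ y := fun h => hPQ a (h1.trans h.symm)
          rw [h1, Function.update_self, Function.update_of_ne h2]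
          intro hcontra
          apply hval.2
          rw [hF]
          exact Finset.mem_image.mpr ⟨a, Finset.mem_filter.mpr ⟨haT, Or.inl h1⟩,
            by rw [if_pos h1, ← hcontra]⟩
        · by_cases h2 : Q a = y
          · rw [h2, Function.update_of_ne h1, Function.update_self]
            intro hcontra
            apply hval.2
            rw [hF]
            exact Finset.mem_image.mpr ⟨a, Finset.mem_filter.mpr ⟨haT, Or.inr h2⟩,
              by rw [if_neg h1]; exact hcontra⟩
          · rw [Function.update_of_ne h1, Function.update_of_ne h2]
            exact hw' a (Finset.mem_erase.mpr ⟨h1, hPa⟩) (Finset.mem_erase.mpr ⟨h2, hQa⟩)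
  obtain ⟨w, hwL, hw⟩ := main (Finset.univ : Finset α).card univ le_rfl
  exact ⟨w, hwL, fun a => hw a (Finset.mem_univ _) (Finset.mem_univ _)⟩

lemma sym2_exists_rep (z : Sym2 V) : ∃ a b : V, z = s(a, b) := by
  induction z using Sym2.ind with
  | _ x y => exact ⟨x, y, rfl⟩

/-- If `G` is `d`-regular with `d ≥ 6`, then `ch_σ^e(G) ≤ 3`. -/
theorem stmt_7 [Fintype V] [DecidableEq V] (G : SimpleGraph V) [DecidableRel G.Adj]
    (d : ℕ) (hd : 6 ≤ d) (hreg : G.IsRegularOfDegree d)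
    (σ : LinearOrder G.edgeSet)
    (L : G.edgeSet → Finset ℝ) (hL : ∀ e, (L e).card = 3) :
    ∃ w : G.edgeSet → ℝ, (∀ e, w e ∈ L e) ∧ ProperSeq G σ w := by
  classical
  -- the set of edges sharing an endpoint with `e`, other than `e` itself
  set R : G.edgeSet → Finset G.edgeSet := fun e =>
    univ.filter (fun y => y ≠ e ∧ ∃ z : V, z ∈ (y : Sym2 V) ∧ z ∈ (e : Sym2 V)) with hRdef
  have hmemR : ∀ e y : G.edgeSet,
      y ∈ R e ↔ (y ≠ e ∧ ∃ z : V, z ∈ (y : Sym2 V) ∧ z ∈ (e : Sym2 V)) := by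
    intro e y
    rw [hRdef]
    simp
  have hsymm : ∀ e y, y ∈ R e → e ∈ R y := by
    intro e y hy
    rw [hmemR] at hy ⊢
    obtain ⟨h1, zz, h2, h3⟩ := hy
    exact ⟨fun h => h1 h.symm, zz, h3, h2⟩
  -- each `R e` has exactly `2d - 2` elements
  have hcardR : ∀ e, (R e).card = 2 * d - 2 := by
    intro e
    obtain ⟨a, b, hab⟩ := sym2_exists_rep (e : Sym2 V)
    have hadj : G.Adj a b := G.mem_edgeSet.mp (hab ▸ e.prop)
    have hne : a ≠ b := hadj.ne
    set A : Finset G.edgeSet := univ.filter (fun y : G.edgeSet => a ∈ (y : Sym2 V)) with hAdef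
    set B : Finset G.edgeSet := univ.filter (fun y : G.edgeSet => b ∈ (y : Sym2 V)) with hBdef
    have hA : A.card = d := card_incFilter G hreg a
    have hB : B.card = d := card_incFilter G hreg b
    have hRe : R e = (A ∪ B).erase e := by
      ext y
      rw [hmemR, Finset.mem_erase, Finset.mem_union, hAdef, hBdef,
        Finset.mem_filter, Finset.mem_filter]
      constructor
      · rintro ⟨h1, zz, h2, h3⟩
        rw [hab, Sym2.mem_iff] at h3
        rcases h3 with rfl | rfl
        · exact ⟨h1, Or.inl ⟨Finset.mem_univ _, h2⟩⟩
        · exact ⟨h1, Or.inr ⟨Finset.mem_univ _, h2⟩⟩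
      · rintro ⟨h1, h2⟩
        refine ⟨h1, ?_⟩
        rcases h2 with ⟨_, h2⟩ | ⟨_, h2⟩
        · exact ⟨a, h2, by rw [hab]; simp⟩
        · exact ⟨b, h2, by rw [hab]; simp⟩
    have hAB : A ∩ B = {e} := by
      ext y
      rw [Finset.mem_inter, hAdef, hBdef, Finset.mem_filter, Finset.mem_filter,
        Finset.mem_singleton]
      constructor
      · rintro ⟨⟨_, h1⟩, _, h2⟩
        have : (y : Sym2 V) = s(a, b) := (Sym2.mem_and_mem_iff hne).mp ⟨h1, h2⟩
        exact Subtype.ext (this.trans hab.symm)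
      · rintro rfl
        refine ⟨⟨Finset.mem_univ _, ?_⟩, ⟨Finset.mem_univ _, ?_⟩⟩ <;> rw [hab] <;> simp
    have heA : e ∈ A := by
      rw [hAdef, Finset.mem_filter]
      exact ⟨Finset.mem_univ _, by rw [hab]; simp⟩
    have hU : (A ∪ B).card = 2 * d - 1 := by
      have hh := Finset.card_union_add_card_inter A B
      rw [hAB, hA, hB, Finset.card_singleton] at hh
      omega
    rw [hRe, Finset.card_erase_of_mem (Finset.mem_union_left _ heA), hU]
    omega
  -- Hall's condition, by double counting (the "adjacency" relation is symmetric and regular)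
  have hall : ∀ S : Finset G.edgeSet, S.card ≤ (S.biUnion R).card := by
    intro S
    set N := S.biUnion R with hN
    have hsub : ∀ e ∈ S, R e ⊆ N := fun e he => Finset.subset_biUnion_of_mem R he
    have hmul : (2 * d - 2) * S.card ≤ (2 * d - 2) * N.card := by
      calc (2 * d - 2) * S.card = ∑ _e ∈ S, (2 * d - 2) := by
            rw [Finset.sum_const, smul_eq_mul, mul_comm]
        _ = ∑ e ∈ S, (R e).card := Finset.sum_congr rfl (fun e _ => (hcardR e).symm)
        _ = ∑ e ∈ S, (N.filter (fun y => y ∈ R e)).card := by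
            apply Finset.sum_congr rfl
            intro e he
            rw [show N.filter (fun y => y ∈ R e) = R e from by
              rw [Finset.filter_mem_eq_inter]; exact Finset.inter_eq_right.mpr (hsub e he)]
        _ = ∑ y ∈ N, (S.filter (fun e => y ∈ R e)).card := by
            simp_rw [Finset.card_filter]
            exact Finset.sum_comm
        _ ≤ ∑ y ∈ N, (R y).card := by
            apply Finset.sum_le_sum
            intro y _
            apply Finset.card_le_card
            intro e he
            exact hsymm _ _ (Finset.mem_filter.mp he).2
        _ = ∑ _y ∈ N, (2 * d - 2) := Finset.sum_congr rfl (fun y _ => hcardR y)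
        _ = (2 * d - 2) * N.card := by rw [Finset.sum_const, smul_eq_mul, mul_comm]
    exact Nat.le_of_mul_le_mul_left hmul (by omega)
  obtain ⟨r, hrinj, hrmem⟩ := (Finset.all_card_le_biUnion_card_iff_exists_injective R).mp hall
  have hrspec : ∀ e, r e ≠ e ∧ ∃ zz : V, zz ∈ ((r e) : Sym2 V) ∧ zz ∈ (e : Sym2 V) :=
    fun e => (hmemR e (r e)).mp (hrmem e)
  have hrne : ∀ e, r e ≠ e := fun e => (hrspec e).1
  choose z hz1 hz2 using fun e => (hrspec e).2
  -- the other endpoint of `e`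
  have hcoex : ∀ e : G.edgeSet, ∃ c : V, s(z e, c) = (e : Sym2 V) :=
    fun e => ⟨Sym2.Mem.other' (hz2 e), Sym2.other_spec' (hz2 e)⟩
  choose co hco using hcoex
  have hadjzco : ∀ e, G.Adj (z e) (co e) :=
    fun e => G.mem_edgeSet.mp (by rw [hco e]; exact e.prop)
  -- the partner edge, at the same position in the list at the other endpoint
  obtain ⟨w, hwL, hw⟩ := greedy_aux L hL r
    (fun e => (incEdges G σ (co e)).getD ((incEdges G σ (z e)).idxOf (r e)) (r e))
    (by
      intro e heq
      have hmem : r e ∈ incEdges G σ (z e) := (mem_incEdges G σ).mpr (hz1 e)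
      have hi : (incEdges G σ (z e)).idxOf (r e) < (incEdges G σ (z e)).length :=
        List.idxOf_lt_length_iff.mpr hmem
      have hi' : (incEdges G σ (z e)).idxOf (r e) < (incEdges G σ (co e)).length := by
        rw [length_incEdges G σ hreg] at hi ⊢
        exact hi
      have hgd : (incEdges G σ (co e)).getD ((incEdges G σ (z e)).idxOf (r e)) (r e)
          = (incEdges G σ (co e))[(incEdges G σ (z e)).idxOf (r e)]'hi' :=
        List.getD_eq_getElem _ _ hi'
      have hQco : co e ∈ (((incEdges G σ (co e)).getD
          ((incEdges G σ (z e)).idxOf (r e)) (r e)) : Sym2 V) := by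
        rw [hgd]
        exact (mem_incEdges G σ).mp (List.getElem_mem hi')
      have heq' : r e = (incEdges G σ (co e)).getD ((incEdges G σ (z e)).idxOf (r e)) (r e) :=
        heq
      rw [← heq'] at hQco
      have h1 : z e ∈ ((r e) : Sym2 V) := hz1 e
      have : ((r e) : Sym2 V) = s(z e, co e) :=
        (Sym2.mem_and_mem_iff (hadjzco e).ne).mp ⟨h1, hQco⟩
      exact hrne e (Subtype.ext (this.trans (hco e))))
    hrinj
  refine ⟨w, hwL, ?_⟩
  intro u v huv
  have hew : s(u, v) ∈ G.edgeSet := G.mem_edgeSet.mpr huv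
  set e : G.edgeSet := ⟨s(u, v), hew⟩ with he
  have hecoe : (e : Sym2 V) = s(u, v) := rfl
  have hwe : w (r e) ≠ w ((incEdges G σ (co e)).getD ((incEdges G σ (z e)).idxOf (r e)) (r e)) :=
    hw e
  have hrnee : ((r e) : Sym2 V) ≠ s(u, v) := by
    intro hcontra
    exact hrne e (Subtype.ext (hcontra.trans hecoe.symm))
  have hz : z e = u ∨ z e = v := by
    have := hz2 e
    rw [hecoe, Sym2.mem_iff] at this
    exact this
  rcases hz with hzu | hzv
  · have hcov : co e = v := by
      have hh := hco e
      rw [hzu, hecoe] at hh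
      exact Sym2.congr_right.mp hh
    rw [hzu, hcov] at hwe
    exact key_distinguish G σ hreg huv (r e) (hzu ▸ hz1 e) hrnee w hwe
  · have hcou : co e = u := by
      have hh := hco e
      rw [hzv, hecoe, Sym2.eq_swap (a := u)] at hh
      exact Sym2.congr_right.mp hh
    rw [hzv, hcou] at hwe
    have : ((r e) : Sym2 V) ≠ s(v, u) := by rw [Sym2.eq_swap]; exact hrnee
    exact (key_distinguish G σ hreg huv.symm (r e) (hzv ▸ hz1 e) this w hwe).symm
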